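/- Let X be chi-squared distributed with k degrees of freedom, i.e., X = Σᵢ₌₁ᵏ gᵢ² where gᵢ are i.i.d. N(0, σ²). Then for all t > 0, Pr[X − kσ² ≥ (2√(kt) + 2t)σ²] ≤ exp(−t). -/

import Mathlib

open MeasureTheory ProbabilityTheory Real
open scoped NNReal ENNReal

lemma key_log_bound {u : ℝ} (h0 : 0 ≤ u) (h1 : u < 1) :
    -Real.log (1 - u) ≤ u + u ^ 2 / (2 * (1 - u)) := by
  rcases eq_or_lt_of_le h0 with rfl | hu
  · simp
  have hasD : ∀ x : ℝ, x < 1 →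
      HasDerivAt (fun y : ℝ => y + y ^ 2 / (2 * (1 - y)) + Real.log (1 - y))
        (1 + (2 * x * (2 * (1 - x)) - x ^ 2 * (-2)) / (2 * (1 - x)) ^ 2 + (-1) / (1 - x)) x := by
    intro x hx
    have h1x : (1 : ℝ) - x ≠ 0 := by intro h; linarith [(sub_eq_zero.mp h).symm]
    have d1 : HasDerivAt (fun y : ℝ => y) 1 x := hasDerivAt_id x
    have d2 : HasDerivAt (fun y : ℝ => y ^ 2) (2 * x) x := by
      simpa using hasDerivAt_pow 2 x
    have d3 : HasDerivAt (fun y : ℝ => 2 * (1 - y)) (2 * (-1)) x :=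
      ((hasDerivAt_id x).const_sub 1).const_mul 2
    have h2x : 2 * (1 - x) ≠ 0 := by
      intro h
      have : (1 : ℝ) - x = 0 := by linarith [h]
      exact h1x this
    have d4 := d2.div d3 h2x
    have d5 : HasDerivAt (fun y : ℝ => Real.log (1 - y)) ((-1) / (1 - x)) x :=
      ((hasDerivAt_id x).const_sub 1).log h1x
    have := (d1.add d4).add d5
    exact this.congr_deriv (by ring)
  have hmono : StrictMonoOn (fun y : ℝ => y + y ^ 2 / (2 * (1 - y)) + Real.log (1 - y))
      (Set.Ico (0 : ℝ) 1) := by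
    apply strictMonoOn_of_deriv_pos (convex_Ico 0 1)
    · intro x hx
      exact (hasD x hx.2).continuousAt.continuousWithinAt
    · intro x hx
      rw [interior_Ico] at hx
      rw [(hasD x hx.2).deriv]
      have h1x : (0 : ℝ) < 1 - x := by linarith [hx.2]
      have hx0 : 0 < x := hx.1
      have heq : 1 + (2 * x * (2 * (1 - x)) - x ^ 2 * (-2)) / (2 * (1 - x)) ^ 2 + (-1) / (1 - x)
          = x ^ 2 / (2 * (1 - x) ^ 2) := by
        field_simp
        ring
      rw [heq]
      positivity
  have h0mem : (0 : ℝ) ∈ Set.Ico (0 : ℝ) 1 := ⟨le_refl _, one_pos⟩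
  have humem : u ∈ Set.Ico (0 : ℝ) 1 := ⟨h0, h1⟩
  have := hmono h0mem humem hu
  simp only at this
  have h00 : (0 : ℝ) + 0 ^ 2 / (2 * (1 - 0)) + Real.log (1 - 0) = 0 := by simp
  rw [h00] at this
  linarith

lemma exp_sq_gaussian (v : ℝ≥0) (hv : v ≠ 0) (c : ℝ) (hc : 2 * c * v < 1) :
    Integrable (fun x => Real.exp (c * x ^ 2)) (gaussianReal 0 v) ∧
      ∫ x, Real.exp (c * x ^ 2) ∂(gaussianReal 0 v) = (Real.sqrt (1 - 2 * c * v))⁻¹ := by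
  have hvpos : 0 < (v : ℝ) := by positivity
  set b : ℝ := 1 / (2 * v) - c with hb
  have hb2 : (1 : ℝ) - 2 * c * v = 2 * v * b := by
    rw [hb]; field_simp
  have hbpos : 0 < b := by
    have h1 : (0 : ℝ) < 1 - 2 * c * v := by linarith
    rw [hb2] at h1
    nlinarith
  have hpt : ∀ x : ℝ, gaussianPDFReal 0 v x * Real.exp (c * x ^ 2)
      = (Real.sqrt (2 * π * v))⁻¹ * Real.exp (-b * x ^ 2) := by
    intro x
    rw [gaussianPDFReal]
    rw [mul_assoc, ← Real.exp_add]
    congr 1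
    rw [hb]
    field_simp
    ring
  have hmeasf : Measurable fun x => (gaussianPDFReal 0 v x).toNNReal :=
    (measurable_gaussianPDFReal 0 v).real_toNNReal
  have hdd : gaussianReal 0 v
      = volume.withDensity (fun x => ((gaussianPDFReal 0 v x).toNNReal : ℝ≥0∞)) := by
    rw [gaussianReal_of_var_ne_zero 0 hv]
    rfl
  have hsmul : (fun x => ((gaussianPDFReal 0 v x).toNNReal : ℝ≥0) • Real.exp (c * x ^ 2))
      = fun x => (Real.sqrt (2 * π * v))⁻¹ * Real.exp (-b * x ^ 2) := by
    funext x
    rw [NNReal.smul_def, Real.coe_toNNReal _ (gaussianPDFReal_nonneg 0 v x), smul_eq_mul, hpt x]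
  constructor
  · rw [hdd, integrable_withDensity_iff_integrable_smul hmeasf, hsmul]
    exact (integrable_exp_neg_mul_sq hbpos).const_mul _
  · rw [hdd, integral_withDensity_eq_integral_smul hmeasf, hsmul]
    rw [integral_const_mul, integral_gaussian]
    have hA : (0 : ℝ) < Real.sqrt (2 * π * v) := Real.sqrt_pos.2 (by positivity)
    have hC : (0 : ℝ) < Real.sqrt (1 - 2 * c * v) := Real.sqrt_pos.2 (by linarith)
    have hprod : Real.sqrt (π / b) * Real.sqrt (1 - 2 * c * v) = Real.sqrt (2 * π * v) := by
      rw [← Real.sqrt_mul (by positivity)]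
      congr 1
      rw [hb2]
      field_simp
    rw [← hprod]
    rw [mul_inv]
    have hB : (0 : ℝ) < Real.sqrt (π / b) := Real.sqrt_pos.2 (by positivity)
    field_simp

theorem chi_squared_upper_tail {Ω : Type*} [MeasureSpace Ω]
    [IsProbabilityMeasure (ℙ : Measure Ω)]
    (k : ℕ) (σ : ℝ) (hσ : 0 < σ) (g : Fin k → Ω → ℝ)
    (hmeas : ∀ i, Measurable (g i))
    (hindep : iIndepFun g ℙ)
    (hdist : ∀ i, Measure.map (g i) ℙ = gaussianReal 0 ⟨σ ^ 2, sq_nonneg σ⟩)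
    (t : ℝ) (ht : 0 < t) :
    ℙ {ω | (2 * Real.sqrt (k * t) + 2 * t) * σ ^ 2 ≤ (∑ i, (g i ω) ^ 2) - k * σ ^ 2} ≤
      ENNReal.ofReal (Real.exp (-t)) := by
  have hσ2 : (0 : ℝ) < σ ^ 2 := by positivity
  rcases Nat.eq_zero_or_pos k with hk0 | hkpos
  · subst hk0
    have hempty : {ω : Ω | (2 * Real.sqrt ((0 : ℕ) * t) + 2 * t) * σ ^ 2
        ≤ (∑ i : Fin 0, (g i ω) ^ 2) - (0 : ℕ) * σ ^ 2} = ∅ := by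
      ext ω
      simp only [Set.mem_setOf_eq, Set.mem_empty_iff_false, iff_false, not_le,
        Finset.univ_eq_empty, Finset.sum_empty, Nat.cast_zero, zero_mul, sub_zero]
      have : Real.sqrt ((0 : ℝ) * t) = 0 := by simp
      nlinarith [Real.sqrt_zero, mul_pos ht hσ2]
    rw [hempty]
    simp
  -- main case
  set K : ℝ := (k : ℝ) with hKdef
  have hKpos : (0 : ℝ) < K := by rw [hKdef]; exact_mod_cast hkpos
  set sk : ℝ := Real.sqrt K with hskdef
  set st : ℝ := Real.sqrt t with hstdef
  have hsk : 0 < sk := Real.sqrt_pos.2 hKpos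
  have hst : 0 < st := Real.sqrt_pos.2 ht
  have hK2 : sk ^ 2 = K := Real.sq_sqrt hKpos.le
  have ht2 : st ^ 2 = t := Real.sq_sqrt ht.le
  have hskt : Real.sqrt (K * t) = sk * st := Real.sqrt_mul hKpos.le t
  have hS : (0 : ℝ) < sk + 2 * st := by linarith
  set L : ℝ := st / (sk + 2 * st) with hLdef
  have hL : 0 < L := by positivity
  set u : ℝ := 2 * L with hudef
  have hu0 : 0 < u := by positivity
  have hu1 : u < 1 := by
    rw [hudef, hLdef]
    rw [mul_div_assoc', div_lt_one hS]
    linarith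
  have hUu : 0 < 1 - u := by linarith
  set c : ℝ := L / σ ^ 2 with hcdef
  have hc : 0 < c := by positivity
  set V : ℝ≥0 := (⟨σ ^ 2, sq_nonneg σ⟩ : ℝ≥0) with hVdef
  have hVc : (V : ℝ) = σ ^ 2 := rfl
  have hV0 : V ≠ 0 := by
    intro h
    have : (V : ℝ) = 0 := by rw [h]; simp
    rw [hVc] at this
    exact hσ2.ne' this
  have h2cv : 2 * c * (V : ℝ) = u := by
    rw [hVc, hcdef, hudef]
    field_simp
  have hG := exp_sq_gaussian V hV0 c (by rw [h2cv]; exact hu1)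
  have hcont : Continuous fun x : ℝ => Real.exp (c * x ^ 2) := by continuity
  -- per-coordinate integrability
  have hint_i : ∀ i, Integrable (fun ω => Real.exp (c * (g i ω) ^ 2)) ℙ := by
    intro i
    have h1 := hG.1
    rw [← hdist i] at h1
    exact (integrable_map_measure hcont.aestronglyMeasurable
      (hmeas i).aemeasurable).1 h1
  -- per-coordinate mgf value
  have hmgf_i : ∀ i, mgf (fun ω => (g i ω) ^ 2) ℙ c = (Real.sqrt (1 - u))⁻¹ := by
    intro i
    have hsm : AEStronglyMeasurable (fun x : ℝ => Real.exp (c * x ^ 2))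
        (Measure.map (g i) ℙ) := hcont.aestronglyMeasurable
    rw [mgf]
    rw [show (∫ ω, Real.exp (c * (g i ω) ^ 2) ∂ℙ)
        = ∫ x, Real.exp (c * x ^ 2) ∂(Measure.map (g i) ℙ) from
      (integral_map (hmeas i).aemeasurable hsm).symm]
    rw [hdist i, hG.2, h2cv]
  -- independence of squares
  have hindepY : iIndepFun
      (fun i => (fun x : ℝ => x ^ 2) ∘ g i) ℙ :=
    hindep.comp (fun _ => fun x : ℝ => x ^ 2) (fun _ => measurable_id.pow_const 2)
  have hmeasY : ∀ i : Fin k, Measurable ((fun x : ℝ => x ^ 2) ∘ g i) :=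
    fun i => (hmeas i).pow_const 2
  -- sum integrability
  have hintsum := hindepY.integrable_exp_mul_sum (t := c) hmeasY
    (s := Finset.univ) (fun i _ => hint_i i)
  set X : Ω → ℝ := fun ω => ∑ i, (g i ω) ^ 2 with hXdef
  have hXY : (∑ i, (fun x : ℝ => x ^ 2) ∘ g i) = X := by
    funext ω
    simp [hXdef, Finset.sum_apply]
  rw [hXY] at hintsum
  set ε : ℝ := (2 * Real.sqrt (K * t) + 2 * t) * σ ^ 2 + K * σ ^ 2 with hεdef
  have hset : {ω | (2 * Real.sqrt (↑k * t) + 2 * t) * σ ^ 2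
      ≤ (∑ i, (g i ω) ^ 2) - ↑k * σ ^ 2} = {ω | ε ≤ X ω} := by
    ext ω
    simp only [Set.mem_setOf_eq, hεdef, hXdef]
    constructor <;> intro h <;> linarith
  have hch := measure_ge_le_exp_mul_mgf (μ := ℙ) (X := X) ε hc.le hintsum
  have hmgfX : mgf X ℙ c = ((Real.sqrt (1 - u))⁻¹) ^ k := by
    rw [← hXY, hindepY.mgf_sum hmeasY Finset.univ]
    simp only [Function.comp_def]
    rw [Finset.prod_congr rfl (fun i _ => hmgf_i i)]
    simp
  -- the scalar bound
  have hsqrt : (Real.sqrt (1 - u))⁻¹ = Real.exp (-(Real.log (1 - u) / 2)) := by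
    rw [← Real.log_sqrt hUu.le, Real.exp_neg, Real.exp_log (Real.sqrt_pos.2 hUu)]
  have hfinal : Real.exp (-c * ε) * mgf X ℙ c ≤ Real.exp (-t) := by
    rw [hmgfX, hsqrt, ← Real.exp_nat_mul, ← Real.exp_add]
    apply Real.exp_le_exp.mpr
    have hlog := key_log_bound hu0.le hu1
    have hstep : (K / 2) * (-Real.log (1 - u)) ≤ (K / 2) * (u + u ^ 2 / (2 * (1 - u))) :=
      mul_le_mul_of_nonneg_left hlog (by positivity)
    have hkey2 : -c * ε + (K / 2) * (u + u ^ 2 / (2 * (1 - u))) = -t := by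
      rw [hεdef, hcdef, hudef, hLdef, hskt, ← hK2, ← ht2]
      have h1mu : 1 - 2 * (st / (sk + 2 * st)) = sk / (sk + 2 * st) := by
        field_simp
        ring
      rw [h1mu]
      field_simp
      ring
    have hcast : (k : ℝ) * (-(Real.log (1 - u) / 2)) = (K / 2) * (-Real.log (1 - u)) := by
      rw [← hKdef]; ring
    calc -c * ε + (k : ℝ) * (-(Real.log (1 - u) / 2))
        = -c * ε + (K / 2) * (-Real.log (1 - u)) := by rw [hcast]
      _ ≤ -c * ε + (K / 2) * (u + u ^ 2 / (2 * (1 - u))) := by linarith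
      _ = -t := hkey2
  rw [hset, ← ENNReal.ofReal_toReal (measure_ne_top ℙ {ω | ε ≤ X ω})]
  exact ENNReal.ofReal_le_ofReal (hch.trans hfinal)
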